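/- Let a, b : ℕ → ℤ∖{0} be injective sequences and F ⊆ ℕ any subset. Then there exist a probability space (X,𝒳,μ), measure preserving transformations T, S : X → X, each measurably isomorphic to a Bernoulli shift, and a set A ∈ 𝒳 with μ(A) = 1/2, such that μ(T^{−a(n)}A ∩ S^{−b(n)}A) = 0 for every n ∈ F and μ(T^{−a(n)}A ∩ S^{−b(n)}A) = 1/4 for every n ∉ F. -/

import Mathlib

open MeasureTheory

/-- A measure preserving transformation is *Bernoulli* if the system it generates is
measurably isomorphic (mod 0) to a Bernoulli shift on finitely many symbols. -/
def IsBernoulli {X : Type*} [MeasurableSpace X] (μ : Measure X) (T : X → X) : Prop :=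
  ∃ (k : ℕ), 0 < k ∧ ∃ (p : Fin k → ℝ), (∀ i, 0 ≤ p i) ∧ (∑ i, p i = 1) ∧
    ∃ (ν : Measure (ℤ → Fin k)), IsProbabilityMeasure ν ∧
      (∀ (s : Finset ℤ) (f : ℤ → Fin k),
        ν {x | ∀ i ∈ s, x i = f i} = ENNReal.ofReal (∏ i ∈ s, p (f i))) ∧
      ∃ (Φ : X → (ℤ → Fin k)) (Ψ : (ℤ → Fin k) → X),
        MeasurePreserving Φ μ ν ∧ MeasurePreserving Ψ ν μ ∧
        (∀ᵐ x ∂μ, Ψ (Φ x) = x) ∧ (∀ᵐ y ∂ν, Φ (Ψ y) = y) ∧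
        (∀ᵐ x ∂μ, Φ (T x) = fun i => Φ x (i + 1))

namespace BernoulliAux

noncomputable section
instance : TopologicalSpace (Fin 2) := ⊥
instance : DiscreteTopology (Fin 2) := ⟨rfl⟩
abbrev G := ℤ → Fin 2
def K₀ : TopologicalSpace.PositiveCompacts G := ⊤
def μ : Measure G := Measure.addHaarMeasure K₀
instance : μ.IsAddLeftInvariant := Measure.isAddLeftInvariant_addHaarMeasure K₀
instance : IsProbabilityMeasure μ := by
  constructor
  have := Measure.addHaarMeasure_self (K₀ := K₀)
  rwa [show (K₀ : Set G) = Set.univ from TopologicalSpace.PositiveCompacts.coe_top] at this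

def Cyl (s : Finset ℤ) (g : ℤ → Fin 2) : Set G := {x | ∀ i ∈ s, x i = g i}

lemma measurableSet_cyl (s : Finset ℤ) (g : ℤ → Fin 2) : MeasurableSet (Cyl s g) := by
  have : Cyl s g = ⋂ i ∈ s, (fun x : G => x i) ⁻¹' {g i} := by
    ext x; simp [Cyl]
  rw [this]
  exact MeasurableSet.biInter s.countable_toSet
    (fun i _ => measurable_pi_apply i (MeasurableSet.singleton (g i)))

lemma two_add (t u : Fin 2) : t + u + u = t := by revert t u; decide
lemma two_eq_add_iff (t u w : Fin 2) : t + u = w ↔ t = w + u := by revert t u w; decide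

lemma fin2_addleft (t u : Fin 2) : u + t = 0 ↔ t = u := by revert t u; decide

lemma cyl_translate (s : Finset ℤ) (g : ℤ → Fin 2) : μ (Cyl s g) = μ (Cyl s 0) := by
  have h : Cyl s g = (fun x : G => g + x) ⁻¹' (Cyl s 0) := by
    ext x
    simp only [Cyl, Set.mem_preimage, Set.mem_setOf_eq, Pi.add_apply, Pi.zero_apply]
    exact forall₂_congr fun i _ => (fin2_addleft (x i) (g i)).symm
  rw [h, measure_preimage_add]

def extend0 (s : Finset ℤ) (h : s → Fin 2) : ℤ → Fin 2 := fun i => if hi : i ∈ s then h ⟨i, hi⟩ else 0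

lemma cyl_disjoint (s : Finset ℤ) (h1 h2 : s → Fin 2) (hne : h1 ≠ h2) :
    Disjoint (Cyl s (extend0 s h1)) (Cyl s (extend0 s h2)) := by
  rw [Set.disjoint_left]
  intro x hx1 hx2
  apply hne
  funext ⟨i, hi⟩
  have e1 := hx1 i hi
  have e2 := hx2 i hi
  simp only [extend0, hi, dif_pos] at e1 e2
  rw [← e1, ← e2]

lemma cyl_measure (s : Finset ℤ) (g : ℤ → Fin 2) :
    μ (Cyl s g) = (2 : ENNReal)⁻¹ ^ s.card := by
  -- partition
  classical
  have hunion : (⋃ h ∈ (Finset.univ : Finset (s → Fin 2)), Cyl s (extend0 s h)) = Set.univ := by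
    ext x
    simp only [Set.mem_iUnion, Set.mem_univ, iff_true, Finset.mem_univ, exists_true_left]
    exact ⟨fun i => x i, fun i hi => by simp [extend0, hi]⟩
  have hdisj : ((Finset.univ : Finset (s → Fin 2)) : Set (s → Fin 2)).PairwiseDisjoint (fun h => Cyl s (extend0 s h)) := by
    intro h1 _ h2 _ hne
    exact cyl_disjoint s h1 h2 hne
  have hsum := measure_biUnion_finset (μ := μ) hdisj (fun h _ => measurableSet_cyl s (extend0 s h))
  rw [hunion] at hsum
  have hμuniv : μ Set.univ = 1 := measure_univ
  have hconst : ∀ h : s → Fin 2, μ (Cyl s (extend0 s h)) = μ (Cyl s 0) := fun h => cyl_translate _ _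
  rw [hμuniv] at hsum
  simp only [hconst] at hsum
  rw [Finset.sum_const, Finset.card_univ] at hsum
  have hcard : Fintype.card (s → Fin 2) = 2 ^ s.card := by
    simp [Fintype.card_fun]
  rw [hcard] at hsum
  have h0 : μ (Cyl s 0) = (2 : ENNReal)⁻¹ ^ s.card := by
    rw [nsmul_eq_mul] at hsum
    have := ENNReal.eq_inv_of_mul_eq_one_left hsum.symm
    rw [← inv_inv (μ (Cyl s 0)), ← this]
    rw [← ENNReal.inv_pow]
    norm_num
  rw [cyl_translate, h0]

lemma res_preimage_singleton (s : Finset ℤ) (h : s → Fin 2) :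
    (s.restrict · : G → _) ⁻¹' {h} = Cyl s (extend0 s h) := by
  ext x
  simp only [Set.mem_preimage, Set.mem_singleton_iff, funext_iff, Subtype.forall, Cyl,
    Set.mem_setOf_eq, extend0, Finset.restrict]
  exact forall₂_congr fun i hi => by rw [dif_pos hi]

lemma measure_cylinder (ν : Measure G) (s : Finset ℤ) (S : Set ((i : s) → Fin 2)) :
    ν (cylinder s S) = ∑ h ∈ S.toFinite.toFinset, ν (Cyl s (extend0 s h)) := by
  classical
  have hre : cylinder s S = ⋃ h ∈ S.toFinite.toFinset, Cyl s (extend0 s h) := by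
    ext x
    simp only [mem_cylinder, Set.mem_iUnion, Set.Finite.mem_toFinset, ← res_preimage_singleton,
      Set.mem_preimage, Set.mem_singleton_iff]
    constructor
    · intro hx; exact ⟨_, hx, rfl⟩
    · rintro ⟨h, hh, hx⟩; rwa [hx]
  rw [hre]
  exact measure_biUnion_finset (fun h1 _ h2 _ hne => cyl_disjoint s h1 h2 hne)
    (fun h _ => measurableSet_cyl s (extend0 s h))

lemma measure_eq_of_cyl (ν₁ ν₂ : Measure G) [IsProbabilityMeasure ν₁] [IsProbabilityMeasure ν₂]
    (h : ∀ s g, ν₁ (Cyl s g) = ν₂ (Cyl s g)) : ν₁ = ν₂ := by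
  refine ext_of_generate_finite _ generateFrom_measurableCylinders.symm
    isPiSystem_measurableCylinders ?_ (by simp)
  intro t ht
  obtain ⟨s, S, _, rfl⟩ := (mem_measurableCylinders t).mp ht
  rw [measure_cylinder, measure_cylinder]
  exact Finset.sum_congr rfl fun g _ => h s (extend0 s g)

lemma coordFun_measurable (e : Equiv.Perm ℤ) (v : ℤ → Fin 2) :
    Measurable (fun x : G => fun i => x (e i) + v i) :=
  measurable_pi_lambda _ fun i =>
    (measurable_of_countable (fun t : Fin 2 => t + v i)).comp (measurable_pi_apply (e i))

lemma coordFun_mp (e : Equiv.Perm ℤ) (v : ℤ → Fin 2) :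
    MeasurePreserving (fun x : G => fun i => x (e i) + v i) μ μ := by
  refine ⟨coordFun_measurable e v, ?_⟩
  have : IsProbabilityMeasure (μ.map (fun x : G => fun i => x (e i) + v i)) :=
    Measure.isProbabilityMeasure_map (coordFun_measurable e v).aemeasurable
  refine measure_eq_of_cyl _ _ fun s g => ?_
  rw [Measure.map_apply (coordFun_measurable e v) (measurableSet_cyl s g)]
  have hpre : (fun x : G => fun i => x (e i) + v i) ⁻¹' Cyl s g
      = Cyl (s.image e) (fun j => g (e.symm j) + v (e.symm j)) := by
    ext x
    simp only [Set.mem_preimage, Cyl, Set.mem_setOf_eq, Finset.mem_image]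
    constructor
    · rintro hx j ⟨i, hi, rfl⟩
      rw [e.symm_apply_apply]
      exact (two_eq_add_iff _ _ _).mp (hx i hi)
    · intro hx i hi
      have := hx (e i) ⟨i, hi, rfl⟩
      rw [e.symm_apply_apply] at this
      rw [this, two_add]
  rw [hpre, cyl_measure, cyl_measure, Finset.card_image_of_injective _ e.injective]

def coordPerm (e : Equiv.Perm ℤ) (v : ℤ → Fin 2) : Equiv.Perm G where
  toFun x := fun i => x (e i) + v i
  invFun y := fun j => y (e.symm j) + v (e.symm j)
  left_inv x := by
    funext j
    show x (e (e.symm j)) + v (e.symm j) + v (e.symm j) = x j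
    rw [e.apply_symm_apply]; exact two_add _ _
  right_inv y := by
    funext i
    show y (e.symm (e i)) + v (e.symm (e i)) + v i = y i
    rw [e.symm_apply_apply]; exact two_add _ _

lemma coordPerm_mp (e : Equiv.Perm ℤ) (v : ℤ → Fin 2) :
    MeasurePreserving (coordPerm e v) μ μ := coordFun_mp e v

lemma coordPerm_symm_mp (e : Equiv.Perm ℤ) (v : ℤ → Fin 2) :
    MeasurePreserving ⇑(coordPerm e v).symm μ μ := coordFun_mp e.symm fun j => v (e.symm j)

def σ : Equiv.Perm G := coordPerm (Equiv.addRight 1) 0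

lemma σ_apply (x : G) (i : ℤ) : σ x i = x (i + 1) := by
  show x (Equiv.addRight 1 i) + 0 = x (i + 1)
  simp

lemma σ_inv_apply (x : G) (i : ℤ) : σ⁻¹ x i = x (i - 1) := by
  show x ((Equiv.addRight 1).symm i) + 0 = x (i - 1)
  simp [sub_eq_add_neg]

lemma σ_zpow (m : ℤ) : ∀ (x : G) (i : ℤ), (σ ^ m) x i = x (i + m) := by
  induction m using Int.induction_on with
  | zero => intro x i; simp
  | succ k ih =>
    intro x i
    rw [zpow_add_one, Equiv.Perm.mul_apply, ih, σ_apply]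
    congr 1; ring
  | pred k ih =>
    intro x i
    rw [zpow_sub_one, Equiv.Perm.mul_apply, ih, σ_inv_apply]
    congr 1; ring

def enc (p q : Fin 2) : Fin 4 := ⟨2 * p.val + q.val, by omega⟩
def dec1 (y : Fin 4) : Fin 2 := ⟨y.val / 2, by omega⟩
def dec2 (y : Fin 4) : Fin 2 := ⟨y.val % 2, by omega⟩

lemma enc_eq_iff (p q : Fin 2) (y : Fin 4) : enc p q = y ↔ p = dec1 y ∧ q = dec2 y := by
  revert p q y; decide
lemma enc_dec (y : Fin 4) : enc (dec1 y) (dec2 y) = y := by revert y; decide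
lemma dec1_enc (p q : Fin 2) : dec1 (enc p q) = p := by revert p q; decide
lemma dec2_enc (p q : Fin 2) : dec2 (enc p q) = q := by revert p q; decide

def Φ : G → (ℤ → Fin 4) := fun x i => enc (x (2*i)) (x (2*i+1))
def Ψ : (ℤ → Fin 4) → G := fun y j =>
  if Even j then dec1 (y (j/2)) else dec2 (y ((j-1)/2))

lemma ΨΦ (x : G) : Ψ (Φ x) = x := by
  funext j
  by_cases hj : Even j
  · obtain ⟨t, rfl⟩ := hj
    rw [Ψ, if_pos ⟨t, rfl⟩]
    have h2 : (t + t) / 2 = t := by omega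
    rw [h2, Φ, dec1_enc]
    congr 1; ring
  · rw [Ψ, if_neg hj, Φ, dec2_enc]
    rw [Int.not_even_iff] at hj
    congr 1; omega

lemma ΦΨ (y : ℤ → Fin 4) : Φ (Ψ y) = y := by
  funext i
  have he : Even (2*i) := ⟨i, by ring⟩
  have ho : ¬ Even (2*i+1) := by rw [Int.not_even_iff]; omega
  rw [Φ, Ψ, Ψ, if_pos he, if_neg ho]
  have h1 : (2*i)/2 = i := by omega
  have h2 : (2*i+1-1)/2 = i := by omega
  rw [h1, h2, enc_dec]

lemma Φ_meas : Measurable Φ := by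
  apply measurable_pi_lambda
  intro i
  have : (fun c : G => Φ c i) = (fun pq : Fin 2 × Fin 2 => enc pq.1 pq.2) ∘
      (fun x : G => (x (2*i), x (2*i+1))) := rfl
  rw [this]
  exact (measurable_of_countable _).comp
    ((measurable_pi_apply (2*i)).prodMk (measurable_pi_apply (2*i+1)))

lemma Ψ_meas : Measurable Ψ := by
  apply measurable_pi_lambda
  intro j
  unfold Ψ
  split_ifs
  · exact (measurable_of_countable dec1).comp (measurable_pi_apply _)
  · exact (measurable_of_countable dec2).comp (measurable_pi_apply _)

def ν : Measure (ℤ → Fin 4) := μ.map Φ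

instance : IsProbabilityMeasure ν := Measure.isProbabilityMeasure_map Φ_meas.aemeasurable

lemma measurableSet_cyl4 (s : Finset ℤ) (f : ℤ → Fin 4) :
    MeasurableSet {y : ℤ → Fin 4 | ∀ i ∈ s, y i = f i} := by
  have : {y : ℤ → Fin 4 | ∀ i ∈ s, y i = f i} = ⋂ i ∈ s, (fun y : ℤ → Fin 4 => y i) ⁻¹' {f i} := by
    ext y; simp
  rw [this]
  exact MeasurableSet.biInter s.countable_toSet
    (fun i _ => measurable_pi_apply i (MeasurableSet.singleton (f i)))

lemma ν_cyl (s : Finset ℤ) (f : ℤ → Fin 4) :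
    ν {y | ∀ i ∈ s, y i = f i} = (2:ENNReal)⁻¹ ^ (2 * s.card) := by
  classical
  rw [ν, Measure.map_apply Φ_meas (measurableSet_cyl4 s f)]
  set s' : Finset ℤ := s.image (fun i => 2*i) ∪ s.image (fun i => 2*i+1) with hs'
  set g : ℤ → Fin 2 := fun j => if Even j then dec1 (f (j/2)) else dec2 (f ((j-1)/2)) with hg
  have hge : ∀ i : ℤ, g (2*i) = dec1 (f i) := by
    intro i
    have he : Even (2*i) := ⟨i, by ring⟩
    have h1 : (2*i)/2 = i := by omega
    rw [hg]; simp only [if_pos he, h1]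
  have hgo : ∀ i : ℤ, g (2*i+1) = dec2 (f i) := by
    intro i
    have ho : ¬ Even (2*i+1) := by rw [Int.not_even_iff]; omega
    have h1 : (2*i+1-1)/2 = i := by omega
    rw [hg]; simp only [if_neg ho, h1]
  have hpre : Φ ⁻¹' {y | ∀ i ∈ s, y i = f i} = Cyl s' g := by
    ext x
    simp only [Set.mem_preimage, Set.mem_setOf_eq, Cyl, Φ, enc_eq_iff]
    constructor
    · intro hx j hj
      rcases Finset.mem_union.mp hj with hj | hj
      · obtain ⟨i, hi, rfl⟩ := Finset.mem_image.mp hj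
        rw [hge]; exact (hx i hi).1
      · obtain ⟨i, hi, rfl⟩ := Finset.mem_image.mp hj
        rw [hgo]; exact (hx i hi).2
    · intro hx i hi
      constructor
      · rw [← hge i]
        exact hx (2*i) (Finset.mem_union_left _ (Finset.mem_image_of_mem _ hi))
      · rw [← hgo i]
        exact hx (2*i+1) (Finset.mem_union_right _ (Finset.mem_image_of_mem _ hi))
  rw [hpre, cyl_measure]
  congr 1
  rw [hs', Finset.card_union_of_disjoint, Finset.card_image_of_injective,
    Finset.card_image_of_injective]
  · omega
  · intro x y h; dsimp only at h; omega
  · intro x y h; dsimp only at h; omega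
  · rw [Finset.disjoint_left]
    rintro j hj1 hj2
    obtain ⟨i, _, rfl⟩ := Finset.mem_image.mp hj1
    obtain ⟨i', _, h⟩ := Finset.mem_image.mp hj2
    omega

section SwapSec

attribute [local instance] Classical.propDecidable

section SwapFn

noncomputable def swapFn (u v : ℕ → ℤ) (E : Set ℕ) (x : ℤ) : ℤ :=
  if h : ∃ n, n ∈ E ∧ u n = x then v h.choose
  else if h : ∃ n, n ∈ E ∧ v n = x then u h.choose
  else x

variable {u v : ℕ → ℤ} {E : Set ℕ}
  (hu : ∀ m ∈ E, ∀ n ∈ E, u m = u n → m = n)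
  (hv : ∀ m ∈ E, ∀ n ∈ E, v m = v n → m = n)
  (huv : ∀ m ∈ E, ∀ n ∈ E, u m ≠ v n)

include hu in
lemma swapFn_u {n : ℕ} (hn : n ∈ E) : swapFn u v E (u n) = v n := by
  rw [swapFn]
  have h : ∃ m, m ∈ E ∧ u m = u n := ⟨n, hn, rfl⟩
  rw [dif_pos h]
  obtain ⟨hmem, heq⟩ := h.choose_spec
  rw [hu _ hmem _ hn heq]

include hv huv in
lemma swapFn_v {n : ℕ} (hn : n ∈ E) : swapFn u v E (v n) = u n := by
  rw [swapFn]
  have h1 : ¬ ∃ m, m ∈ E ∧ u m = v n := by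
    rintro ⟨m, hm, heq⟩; exact huv m hm n hn heq
  rw [dif_neg h1]
  have h : ∃ m, m ∈ E ∧ v m = v n := ⟨n, hn, rfl⟩
  rw [dif_pos h]
  obtain ⟨hmem, heq⟩ := h.choose_spec
  rw [hv _ hmem _ hn heq]

lemma swapFn_fix {x : ℤ} (hx : ∀ n ∈ E, u n ≠ x ∧ v n ≠ x) : swapFn u v E x = x := by
  have h1 : ¬ ∃ m, m ∈ E ∧ u m = x := by rintro ⟨m, hm, heq⟩; exact (hx m hm).1 heq
  have h2 : ¬ ∃ m, m ∈ E ∧ v m = x := by rintro ⟨m, hm, heq⟩; exact (hx m hm).2 heq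
  rw [swapFn, dif_neg h1, dif_neg h2]

include hu hv huv in
lemma swapFn_invol : Function.Involutive (swapFn u v E) := by
  intro x
  rcases em (∃ m, m ∈ E ∧ u m = x) with h | h
  · obtain ⟨m, hm, he⟩ := h
    rw [← he, swapFn_u hu hm, swapFn_v hv huv hm]
  rcases em (∃ m, m ∈ E ∧ v m = x) with h2 | h2
  · obtain ⟨m, hm, he⟩ := h2
    rw [← he, swapFn_v hv huv hm, swapFn_u hu hm]
  · have hx : ∀ m ∈ E, u m ≠ x ∧ v m ≠ x :=
      fun m hm => ⟨fun he => h ⟨m, hm, he⟩, fun he => h2 ⟨m, hm, he⟩⟩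
    rw [swapFn_fix hx, swapFn_fix hx]

end SwapFn

lemma exists_perm (a b : ℕ → ℤ) (ha0 : ∀ n, a n ≠ 0) (hb0 : ∀ n, b n ≠ 0)
    (hainj : Function.Injective a) (hbinj : Function.Injective b) (F : Set ℕ) :
    ∃ π : Equiv.Perm ℤ, π 0 = 0 ∧ (∀ n ∈ F, π (2 * a n) = 2 * b n) ∧
      (∀ n ∉ F, π (2 * a n) ≠ 2 * b n) := by
  have hE : ∀ n, n ∈ {n | n ∉ F ∧ a n = b n} ↔ (n ∉ F ∧ a n = b n) := fun n => Iff.rfl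
  have hc1 : ∀ m ∈ {n | n ∉ F ∧ a n = b n}, ∀ n ∈ {n | n ∉ F ∧ a n = b n},
      2 * a m = 2 * a n → m = n := fun m _ n _ h => hainj (by omega)
  have hc2 : ∀ m ∈ {n | n ∉ F ∧ a n = b n}, ∀ n ∈ {n | n ∉ F ∧ a n = b n},
      4*(m:ℤ)+3 = 4*(n:ℤ)+3 → m = n := fun m _ n _ h => by omega
  have hc3 : ∀ m ∈ {n | n ∉ F ∧ a n = b n}, ∀ n ∈ {n | n ∉ F ∧ a n = b n},
      2 * a m ≠ 4*(n:ℤ)+3 := fun m _ n _ => by omega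
  have ha1 : ∀ m ∈ F, ∀ n ∈ F, 2 * a m = 2 * a n → m = n := fun m _ n _ h => hainj (by omega)
  have ha2 : ∀ m ∈ F, ∀ n ∈ F, 4*(m:ℤ)+1 = 4*(n:ℤ)+1 → m = n := fun m _ n _ h => by omega
  have ha3 : ∀ m ∈ F, ∀ n ∈ F, 2 * a m ≠ 4*(n:ℤ)+1 := fun m _ n _ => by omega
  have hb1 : ∀ m ∈ F, ∀ n ∈ F, 4*(m:ℤ)+1 = 4*(n:ℤ)+1 → m = n := fun m _ n _ h => by omega
  have hb2 : ∀ m ∈ F, ∀ n ∈ F, 2 * b m = 2 * b n → m = n := fun m _ n _ h => hbinj (by omega)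
  have hb3 : ∀ m ∈ F, ∀ n ∈ F, 4*(m:ℤ)+1 ≠ 2 * b n := fun m _ n _ => by omega
  refine ⟨(((swapFn_invol hc1 hc2 hc3).toPerm _).trans
      ((swapFn_invol ha1 ha2 ha3).toPerm _)).trans
      ((swapFn_invol hb1 hb2 hb3).toPerm _), ?_, ?_, ?_⟩
  · show swapFn _ _ F (swapFn _ _ F (swapFn _ _ {n | n ∉ F ∧ a n = b n} 0)) = 0
    have h1 : swapFn (fun n => 2 * a n) (fun n => 4*(n:ℤ)+3) {n | n ∉ F ∧ a n = b n} 0 = 0 :=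
      swapFn_fix fun m _ => ⟨by have := ha0 m; omega, by omega⟩
    have h2 : swapFn (fun n => 2 * a n) (fun n => 4*(n:ℤ)+1) F 0 = 0 :=
      swapFn_fix fun m _ => ⟨by have := ha0 m; omega, by omega⟩
    have h3 : swapFn (fun n => 4*(n:ℤ)+1) (fun n => 2 * b n) F 0 = 0 :=
      swapFn_fix fun m _ => ⟨by omega, by have := hb0 m; omega⟩
    rw [h1, h2, h3]
  · intro n hn
    show swapFn _ _ F (swapFn _ _ F (swapFn _ _ {n | n ∉ F ∧ a n = b n} (2 * a n))) = 2 * b n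
    have h1 : swapFn (fun n => 2 * a n) (fun n => 4*(n:ℤ)+3) {n | n ∉ F ∧ a n = b n}
        (2 * a n) = 2 * a n := by
      refine swapFn_fix fun m hm => ⟨fun he => ?_, by omega⟩
      have : m = n := hainj (by omega)
      exact (this ▸ hm.1) hn
    rw [h1]
    rw [show (2 * a n : ℤ) = (fun n => 2 * a n) n from rfl, swapFn_u ha1 hn]
    rw [show (4*(n:ℤ)+1 : ℤ) = (fun n => 4*(n:ℤ)+1) n from rfl, swapFn_u hb1 hn]
  · intro n hn
    show swapFn _ _ F (swapFn _ _ F (swapFn _ _ {n | n ∉ F ∧ a n = b n} (2 * a n))) ≠ 2 * b n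
    by_cases hab : a n = b n
    · have h1 : swapFn (fun n => 2 * a n) (fun n => 4*(n:ℤ)+3) {n | n ∉ F ∧ a n = b n}
          (2 * a n) = 4*(n:ℤ)+3 := by
        rw [show (2 * a n : ℤ) = (fun n => 2 * a n) n from rfl, swapFn_u hc1 ⟨hn, hab⟩]
      have h2 : swapFn (fun n => 2 * a n) (fun n => 4*(n:ℤ)+1) F (4*(n:ℤ)+3) = 4*(n:ℤ)+3 :=
        swapFn_fix fun m _ => ⟨by omega, by omega⟩
      have h3 : swapFn (fun n => 4*(n:ℤ)+1) (fun n => 2 * b n) F (4*(n:ℤ)+3) = 4*(n:ℤ)+3 :=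
        swapFn_fix fun m _ => ⟨by omega, by omega⟩
      rw [h1, h2, h3]; omega
    · have h1 : swapFn (fun n => 2 * a n) (fun n => 4*(n:ℤ)+3) {n | n ∉ F ∧ a n = b n}
          (2 * a n) = 2 * a n := by
        refine swapFn_fix fun m hm => ⟨fun he => ?_, by omega⟩
        have : m = n := hainj (by omega)
        exact hab (this ▸ hm.2)
      have h2 : swapFn (fun n => 2 * a n) (fun n => 4*(n:ℤ)+1) F (2 * a n) = 2 * a n := by
        refine swapFn_fix fun m hm => ⟨fun he => ?_, by omega⟩
        have : m = n := hainj (by omega)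
        exact hn (this ▸ hm)
      rw [h1, h2]
      by_cases hq : ∃ m, m ∈ F ∧ 2 * b m = 2 * a n
      · obtain ⟨m, hm, he⟩ := hq
        rw [← he, show (2 * b m : ℤ) = (fun n => 2 * b n) m from rfl, swapFn_v hb2 hb3 hm]
        omega
      · rw [swapFn_fix fun m hm => ⟨by omega, fun he => hq ⟨m, hm, he⟩⟩]
        omega


end SwapSec

lemma quarter (k : ℕ) : (2 : ENNReal)⁻¹ ^ (2 * k) = ENNReal.ofReal ((1/4 : ℝ) ^ k) := by
  rw [pow_mul, ENNReal.ofReal_pow (by norm_num : (0:ℝ) ≤ 1/4)]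
  congr 1
  rw [show ((2:ENNReal)⁻¹)^2 = 4⁻¹ by rw [← ENNReal.inv_pow]; norm_num]
  rw [show (1/4:ℝ) = ((4:ℝ))⁻¹ by norm_num, ENNReal.ofReal_inv_of_pos (by norm_num)]
  norm_num

lemma T_equivariant (x : G) : Φ ((σ ^ (2:ℤ)) x) = fun i => Φ x (i + 1) := by
  funext i
  show enc ((σ ^ (2:ℤ)) x (2*i)) ((σ ^ (2:ℤ)) x (2*i+1)) = enc (x (2*(i+1))) (x (2*(i+1)+1))
  rw [σ_zpow, σ_zpow, show (2*i+2 : ℤ) = 2*(i+1) by ring, show (2*i+1+2 : ℤ) = 2*(i+1)+1 by ring]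

lemma mapΨ : ν.map Ψ = μ := by
  rw [ν, Measure.map_map Ψ_meas Φ_meas, show Ψ ∘ Φ = id from funext ΨΦ, Measure.map_id]

lemma isBernoulli_of_conj (g : Equiv.Perm G) (hg : MeasurePreserving ⇑g μ μ)
    (hg' : MeasurePreserving ⇑g⁻¹ μ μ) :
    IsBernoulli μ ⇑((MulAut.conj g) (σ ^ (2:ℤ))) := by
  refine ⟨4, by norm_num, fun _ => 1/4, fun i => by norm_num, ?_, ν, inferInstance, ?_,
    fun x => Φ (g⁻¹ x), fun y => g (Ψ y), ?_, ?_, ?_, ?_, ?_⟩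
  · simp only [Finset.sum_const, Finset.card_univ, Fintype.card_fin, nsmul_eq_mul]
    norm_num
  · intro s f
    rw [ν_cyl, Finset.prod_const, quarter]
  · exact (⟨Φ_meas, rfl⟩ : MeasurePreserving Φ μ ν).comp hg'
  · exact hg.comp ⟨Ψ_meas, mapΨ⟩
  · refine ae_of_all _ fun x => ?_
    show g (Ψ (Φ (g⁻¹ x))) = x
    rw [ΨΦ]
    exact g.apply_symm_apply x
  · refine ae_of_all _ fun y => ?_
    show Φ (g⁻¹ (g (Ψ y))) = y
    rw [show ∀ y, g⁻¹ (g y) = y from g.symm_apply_apply, ΦΨ]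
  · refine ae_of_all _ fun x => ?_
    have hx : ((MulAut.conj g) (σ ^ (2:ℤ))) x = g ((σ ^ (2:ℤ)) (g⁻¹ x)) := by
      rw [MulAut.conj_apply]; rfl
    show Φ (g⁻¹ (((MulAut.conj g) (σ ^ (2:ℤ))) x)) = fun i => Φ (g⁻¹ x) (i + 1)
    rw [hx, show ∀ y, g⁻¹ (g y) = y from g.symm_apply_apply, T_equivariant]

end

end BernoulliAux

open BernoulliAux

/-- For any injective sequences `a, b : ℕ → ℤ∖{0}` and any `F ⊆ ℕ` there are Bernoulli
transformations `T, S` and a set `A` of measure `1/2` with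
`μ(T^{-a(n)}A ∩ S^{-b(n)}A) = 0` for `n ∈ F` and `= 1/4` for `n ∉ F`. -/
theorem exists_bernoulli_prescribed_correlations
    (a b : ℕ → ℤ) (ha0 : ∀ n, a n ≠ 0) (hb0 : ∀ n, b n ≠ 0)
    (hainj : Function.Injective a) (hbinj : Function.Injective b) (F : Set ℕ) :
    ∃ (X : Type) (_ : MeasurableSpace X) (μ : Measure X) (_ : IsProbabilityMeasure μ)
      (T S : Equiv.Perm X),
      MeasurePreserving T μ μ ∧ MeasurePreserving S μ μ ∧
      IsBernoulli μ T ∧ IsBernoulli μ S ∧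
      ∃ A : Set X, MeasurableSet A ∧ μ A = 1 / 2 ∧
        ∀ n : ℕ,
          (n ∈ F → μ ((T ^ a n) ⁻¹' A ∩ (S ^ b n) ⁻¹' A) = 0) ∧
          (n ∉ F → μ ((T ^ a n) ⁻¹' A ∩ (S ^ b n) ⁻¹' A) = 1 / 4) := by
  classical
  obtain ⟨π, hπ0, hπF, hπnF⟩ := exists_perm a b ha0 hb0 hainj hbinj F
  set vv : ℤ → Fin 2 := fun i => if i = 0 then 0 else 1 with hvv
  set ψ : Equiv.Perm G := coordPerm π vv with hψdef
  set T : Equiv.Perm G := σ ^ (2:ℤ) with hTdef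
  set S : Equiv.Perm G := (MulAut.conj ψ) T with hSdef
  have hψmp : MeasurePreserving ⇑ψ μ μ := coordPerm_mp π vv
  have hψ'mp : MeasurePreserving ⇑ψ⁻¹ μ μ := coordPerm_symm_mp π vv
  have hTmp : MeasurePreserving ⇑T μ μ := by
    have h2 : T = σ * σ := by
      rw [hTdef, show (2:ℤ) = 1 + 1 from rfl, zpow_add, zpow_one]
    rw [h2, Equiv.Perm.coe_mul]
    exact (coordPerm_mp _ _).comp (coordPerm_mp _ _)
  have hSmp : MeasurePreserving ⇑S μ μ := by
    have h2 : ⇑S = ⇑ψ ∘ ⇑T ∘ ⇑ψ⁻¹ := by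
      rw [hSdef, MulAut.conj_apply]; rfl
    rw [h2]
    exact hψmp.comp (hTmp.comp hψ'mp)
  have hTid : T = (MulAut.conj (1 : Equiv.Perm G)) T := by simp
  refine ⟨G, inferInstance, μ, inferInstance, T, S, hTmp, hSmp, ?_, ?_, ?_⟩
  · rw [hTid]
    exact isBernoulli_of_conj 1 (by simpa using MeasurePreserving.id μ)
      (by simpa using MeasurePreserving.id μ)
  · exact isBernoulli_of_conj ψ hψmp hψ'mp
  · refine ⟨{x : G | x 0 = 1}, ?_, ?_, ?_⟩
    · exact measurable_pi_apply 0 (MeasurableSet.singleton 1)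
    · have hA : {x : G | x 0 = 1} = Cyl {0} (fun _ => 1) := by
        ext x; simp [Cyl]
      rw [hA, cyl_measure]
      norm_num
    · intro n
      have hTpre : ∀ m : ℤ, (T ^ m) ⁻¹' {x : G | x 0 = 1} = {x : G | x (2 * m) = 1} := by
        intro m
        ext x
        show (T ^ m) x 0 = 1 ↔ x (2 * m) = 1
        rw [hTdef, ← zpow_mul, σ_zpow, zero_add]
      have hSpre : ∀ m : ℤ, (S ^ m) ⁻¹' {x : G | x 0 = 1}
          = {x : G | x (π.symm (2 * m)) + vv (π.symm (2 * m)) = 1} := by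
        intro m
        ext x
        show (S ^ m) x 0 = 1 ↔ _
        have hx : (S ^ m) x = ψ ((T ^ m) (ψ⁻¹ x)) := by
          rw [hSdef, ← map_zpow (MulAut.conj ψ) T m, MulAut.conj_apply]; rfl
        rw [hx]
        have hψ0 : ∀ y : G, ψ y 0 = y 0 := by
          intro y
          show y (π 0) + vv 0 = y 0
          rw [hπ0, hvv]
          simp
        rw [hψ0, hTdef, ← zpow_mul, σ_zpow, zero_add]
        show (ψ⁻¹ x) (2 * m) = 1 ↔ _
        rfl
      constructor
      · intro hn
        have hc : π.symm (2 * b n) = 2 * a n := by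
          rw [← hπF n hn, Equiv.symm_apply_apply]
        have hv1 : vv (2 * a n) = 1 := by
          rw [hvv]
          exact if_neg (by have := ha0 n; omega)
        rw [hTpre, hSpre, hc, hv1]
        have hempty : {x : G | x (2 * a n) = 1} ∩ {x : G | x (2 * a n) + 1 = 1} = ∅ := by
          ext x
          simp only [Set.mem_inter_iff, Set.mem_setOf_eq, Set.mem_empty_iff_false, iff_false,
            not_and]
          intro h1
          rw [h1]
          decide
        rw [hempty, measure_empty]
      · intro hn
        have hcne : π.symm (2 * b n) ≠ 2 * a n := by
          intro h
          exact hπnF n hn (by rw [← h, Equiv.apply_symm_apply])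
        rw [hTpre, hSpre]
        have hset : {x : G | x (2 * a n) = 1}
              ∩ {x : G | x (π.symm (2 * b n)) + vv (π.symm (2 * b n)) = 1}
            = Cyl {2 * a n, π.symm (2 * b n)}
                (fun j => if j = 2 * a n then 1 else 1 + vv (π.symm (2 * b n))) := by
          ext x
          simp only [Set.mem_inter_iff, Set.mem_setOf_eq, Cyl, Finset.mem_insert,
            Finset.mem_singleton]
          constructor
          · rintro ⟨h1, h2⟩ j hj
            rcases hj with rfl | rfl
            · rw [if_pos rfl]; exact h1
            · rw [if_neg hcne]; exact (two_eq_add_iff _ _ _).mp h2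
          · intro h
            refine ⟨?_, ?_⟩
            · have := h (2 * a n) (Or.inl rfl)
              rwa [if_pos rfl] at this
            · have := h (π.symm (2 * b n)) (Or.inr rfl)
              rw [if_neg hcne] at this
              exact (two_eq_add_iff _ _ _).mpr this
        rw [hset, cyl_measure]
        have hcard : ({2 * a n, π.symm (2 * b n)} : Finset ℤ).card = 2 := by
          rw [Finset.card_insert_of_notMem (by simpa using hcne.symm), Finset.card_singleton]
        rw [hcard, show ((2:ENNReal)⁻¹)^2 = 1/4 by rw [← ENNReal.inv_pow]; norm_num]
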